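/- Let n ≥ 5 and let p(s) = s^n + α1·s^{n-1} + 2·s^{n-2} + α3·s^{n-3} + s^{n-4} + α5·s^{n-5} + ... + αn be a monic real polynomial whose coefficient of s^{n-2} equals 2 and whose coefficient of s^{n-4} equals 1, with the convention αk = 0 for k > n. If α7 - α1·α6 ≥ 0, then p is Hurwitz unstable, i.e., p has a complex root with nonnegative real part. -/

import Mathlib

open Polynomial

namespace UnstableAux


noncomputable def A (P : ℝ[X]) (k : ℕ) : ℝ := P.reverse.coeff k

lemma A_zero_of_gt {P : ℝ[X]} {k : ℕ} (h : P.natDegree < k) : A P k = 0 := by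
  unfold A
  rw [coeff_reverse, revAt_eq_self_of_lt h]
  exact coeff_eq_zero_of_natDegree_lt h

def Inv (P : ℝ[X]) : Prop :=
  A P 0 = 1 ∧ (∀ k, 0 ≤ A P k) ∧ (∀ k, k ≤ P.natDegree → 0 < A P k) ∧
  0 ≤ A P 1 * A P 2 - A P 3 ∧ 0 ≤ A P 1 * A P 4 - A P 5 ∧
  0 ≤ A P 1 * A P 6 - A P 7 ∧
  (7 ≤ P.natDegree → 0 < A P 1 * A P 6 - A P 7)

lemma reverse_X_add_C (d : ℝ) : (X + C d).reverse = 1 + C d * X := by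
  ext k
  rw [coeff_reverse, natDegree_X_add_C]
  match k with
  | 0 => rw [revAt_le (by norm_num)]; simp [coeff_one, coeff_X, coeff_X_pow]
  | 1 => rw [revAt_le (by norm_num)]; simp [coeff_one, coeff_X, coeff_X_pow]
  | (k+2) => rw [revAt_eq_self_of_lt (by omega)]; simp [coeff_X, coeff_one]

lemma quad_natDegree (b c : ℝ) : (X^2 + (C b * X + C c) : ℝ[X]).natDegree = 2 := by
  have h1 : degree (C b * X + C c : ℝ[X]) < degree (X^2 : ℝ[X]) := by
    rw [degree_X_pow]
    exact lt_of_le_of_lt (degree_linear_le) (by norm_num)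
  have := degree_add_eq_left_of_degree_lt h1
  rw [degree_X_pow] at this
  exact natDegree_eq_of_degree_eq_some this

lemma reverse_quad (b c : ℝ) : (X^2 + (C b * X + C c)).reverse = 1 + C b * X + C c * X^2 := by
  ext k
  rw [coeff_reverse, quad_natDegree]
  match k with
  | 0 => rw [revAt_le (by norm_num)]; simp [coeff_one, coeff_X, coeff_X_pow]
  | 1 => rw [revAt_le (by norm_num)]; simp [coeff_one, coeff_X, coeff_X_pow]
  | 2 => rw [revAt_le (by norm_num)]; simp [coeff_one, coeff_X, coeff_X_pow]
  | (k+3) => rw [revAt_eq_self_of_lt (by omega)]; simp [coeff_X, coeff_one, coeff_X_pow]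

lemma inv_linear {Q : ℝ[X]} {d : ℝ} (hd : 0 < d) (h : Inv Q) :
    Inv ((X + C d) * Q) := by
  obtain ⟨h0, hnn, hpos, hp1, hp2, hp3, hp3s⟩ := h
  set P := (X + C d) * Q with hPdef
  have hrev : P.reverse = Q.reverse + C d * (Q.reverse * X) := by
    rw [hPdef, reverse_mul_of_domain, reverse_X_add_C]
    ring
  have hA0 : A P 0 = A Q 0 := by
    unfold A
    rw [hrev, coeff_add, coeff_C_mul, mul_coeff_zero]
    simp
  have hAs : ∀ k, A P (k+1) = A Q (k+1) + d * A Q k := by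
    intro k
    unfold A
    rw [hrev, coeff_add, coeff_C_mul, coeff_mul_X]
  have hQmon0 : 0 < A Q 0 := hpos 0 (Nat.zero_le _)
  have hQz : Q ≠ 0 := by
    intro hq
    rw [hq] at hQmon0
    unfold A at hQmon0
    simp at hQmon0
  have hfz : (X + C d : ℝ[X]) ≠ 0 := X_add_C_ne_zero d
  have hdeg : P.natDegree = Q.natDegree + 1 := by
    rw [hPdef, natDegree_mul hfz hQz, natDegree_X_add_C]
    omega
  refine ⟨by rw [hA0, h0], ?_, ?_, ?_, ?_, ?_, ?_⟩
  · intro k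
    match k with
    | 0 => rw [hA0, h0]; norm_num
    | (k+1) => rw [hAs]; have := hnn (k+1); have := hnn k; nlinarith
  · intro k hk
    match k with
    | 0 => rw [hA0]; exact hQmon0
    | (k+1) =>
      rw [hAs]
      have hk' : k ≤ Q.natDegree := by omega
      have := hpos k hk'
      have := hnn (k+1)
      nlinarith
  · rw [hAs 0, hAs 1, hAs 2]
    simp only [h0, Nat.reduceAdd, zero_add]
    nlinarith [hp1, mul_nonneg hd.le (mul_nonneg (hnn 1) (hnn 1)), mul_nonneg (mul_nonneg hd.le hd.le) (hnn 1), mul_pos hd hd, mul_nonneg hd.le (hnn 1)]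
  · rw [hAs 0, hAs 3, hAs 4]
    simp only [h0, Nat.reduceAdd, zero_add]
    nlinarith [hp2, mul_nonneg hd.le (mul_nonneg (hnn 1) (hnn 3)), mul_nonneg (mul_nonneg hd.le hd.le) (hnn 3)]
  · rw [hAs 0, hAs 5, hAs 6]
    simp only [h0, Nat.reduceAdd, zero_add]
    nlinarith [hp3, mul_nonneg hd.le (mul_nonneg (hnn 1) (hnn 5)), mul_nonneg (mul_nonneg hd.le hd.le) (hnn 5)]
  · intro h7
    rw [hAs 0, hAs 5, hAs 6]
    simp only [h0, Nat.reduceAdd, zero_add]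
    have h1 : 0 < A Q 1 := hpos 1 (by omega)
    have h5 : 0 < A Q 5 := hpos 5 (by omega)
    nlinarith [hp3, mul_pos hd (mul_pos h1 h5), mul_nonneg (mul_nonneg hd.le hd.le) h5.le]

lemma inv_quad {Q : ℝ[X]} {b c : ℝ} (hb : 0 < b) (hc : 0 < c) (h : Inv Q) :
    Inv ((X^2 + (C b * X + C c)) * Q) := by
  obtain ⟨h0, hnn, hpos, hp1, hp2, hp3, hp3s⟩ := h
  set P := (X^2 + (C b * X + C c)) * Q with hPdef
  have hrev : P.reverse = Q.reverse + (C b * (Q.reverse * X) + C c * (Q.reverse * X^2)) := by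
    rw [hPdef, reverse_mul_of_domain, reverse_quad]
    ring
  have hA0 : A P 0 = A Q 0 := by
    unfold A
    rw [hrev, coeff_add, coeff_add, coeff_C_mul, coeff_C_mul, mul_coeff_zero, mul_coeff_zero]
    simp
  have hA1 : A P 1 = A Q 1 + b * A Q 0 := by
    unfold A
    rw [hrev, coeff_add, coeff_add, coeff_C_mul, coeff_C_mul, coeff_mul_X]
    rw [coeff_mul_X_pow' Q.reverse 2 1]
    norm_num
  have hAs : ∀ k, A P (k+2) = A Q (k+2) + b * A Q (k+1) + c * A Q k := by
    intro k
    unfold A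
    rw [hrev, coeff_add, coeff_add, coeff_C_mul, coeff_C_mul, coeff_mul_X]
    rw [show k + 2 = k + 2 from rfl, coeff_mul_X_pow Q.reverse 2 k]
    ring
  have hQmon0 : 0 < A Q 0 := hpos 0 (Nat.zero_le _)
  have hQz : Q ≠ 0 := by
    intro hq
    rw [hq] at hQmon0
    unfold A at hQmon0
    simp at hQmon0
  have hfz : (X^2 + (C b * X + C c) : ℝ[X]) ≠ 0 := by
    intro hq
    have := quad_natDegree b c
    rw [hq] at this
    simp at this
  have hdeg : P.natDegree = Q.natDegree + 2 := by
    rw [hPdef, natDegree_mul hfz hQz, quad_natDegree]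
    omega
  refine ⟨by rw [hA0, h0], ?_, ?_, ?_, ?_, ?_, ?_⟩
  · intro k
    match k with
    | 0 => rw [hA0, h0]; norm_num
    | 1 => rw [hA1]; have := hnn 1; have := hnn 0; nlinarith
    | (k+2) => rw [hAs]; have := hnn (k+2); have := hnn (k+1); have := hnn k; nlinarith
  · intro k hk
    match k with
    | 0 => rw [hA0]; exact hQmon0
    | 1 => rw [hA1, h0]; have := hnn 1; nlinarith
    | (k+2) =>
      rw [hAs]
      have hk' : k ≤ Q.natDegree := by omega
      have := hpos k hk'
      have := hnn (k+2); have := hnn (k+1)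
      nlinarith
  · rw [hA1, hAs 0, hAs 1]
    simp only [h0, Nat.reduceAdd, zero_add]
    nlinarith [hp1, mul_nonneg hb.le (mul_nonneg (hnn 1) (hnn 1)), mul_nonneg (mul_nonneg hb.le hb.le) (hnn 1), mul_pos hb hc]
  · rw [hA1, hAs 2, hAs 3]
    simp only [h0, Nat.reduceAdd, zero_add]
    nlinarith [hp2, mul_nonneg hb.le (mul_nonneg (hnn 1) (hnn 3)), mul_nonneg hc.le hp1, mul_nonneg (mul_nonneg hb.le hb.le) (hnn 3), mul_nonneg (mul_nonneg hb.le hc.le) (hnn 2)]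
  · rw [hA1, hAs 4, hAs 5]
    simp only [h0, Nat.reduceAdd, zero_add]
    nlinarith [hp3, mul_nonneg hb.le (mul_nonneg (hnn 1) (hnn 5)), mul_nonneg hc.le hp2, mul_nonneg (mul_nonneg hb.le hb.le) (hnn 5), mul_nonneg (mul_nonneg hb.le hc.le) (hnn 4)]
  · intro h7
    rw [hA1, hAs 4, hAs 5]
    simp only [h0, Nat.reduceAdd, zero_add]
    have h1 : 0 < A Q 1 := hpos 1 (by omega)
    have h5 : 0 < A Q 5 := hpos 5 (by omega)
    nlinarith [hp3, mul_pos hb (mul_pos h1 h5), mul_nonneg hc.le hp2, mul_nonneg (mul_nonneg hb.le hb.le) h5.le, mul_nonneg (mul_nonneg hb.le hc.le) (hnn 4)]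


lemma stable_inv (N : ℕ) : ∀ P : ℝ[X], P.Monic → P.natDegree ≤ N →
    (∀ z : ℂ, aeval z P = 0 → z.re < 0) → Inv P := by
  induction N with
  | zero =>
    intro P hP hdeg _
    have hP1 : P = 1 := hP.natDegree_eq_zero.mp (Nat.le_zero.mp hdeg)
    subst hP1
    have hA : ∀ k, A (1 : ℝ[X]) k = if k = 0 then 1 else 0 := by
      intro k
      unfold A
      rw [show (1 : ℝ[X]) = C 1 from (map_one C).symm, reverse_C, coeff_C]
    refine ⟨by rw [hA]; norm_num, ?_, ?_, ?_, ?_, ?_, ?_⟩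
    · intro k; rw [hA]; split <;> norm_num
    · intro k hk
      have : k = 0 := by simpa using hk
      subst this; rw [hA]; norm_num
    · simp [hA]
    · simp [hA]
    · simp [hA]
    · intro h7; simp at h7
  | succ N ih =>
    intro P hP hdeg hroots
    rcases Nat.lt_or_ge P.natDegree (N+1) with hlt|hge
    · exact ih P hP (by omega) hroots
    have hdegP : P.natDegree = N + 1 := le_antisymm hdeg hge
    have hdeg0 : P.degree ≠ 0 := by
      have : 0 < P.natDegree := by omega
      exact (natDegree_pos_iff_degree_pos.mp this).ne'
    obtain ⟨z, hz⟩ := IsAlgClosed.exists_aeval_eq_zero ℂ P hdeg0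
    have hzre : z.re < 0 := hroots z hz
    by_cases him : z.im = 0
    · -- real root
      have hzeq : (z.re : ℂ) = z := by
        apply Complex.ext <;> simp [him]
      have hev : P.eval z.re = 0 := by
        have h2 : (algebraMap ℝ ℂ) (P.eval z.re) = 0 := by
          rw [← aeval_algebraMap_apply_eq_algebraMap_eval]
          rw [show (algebraMap ℝ ℂ) z.re = (z.re : ℂ) from rfl, hzeq]
          exact hz
        simpa using h2
      obtain ⟨Q, hQ⟩ := dvd_iff_isRoot.mpr hev
      have hQmon : Q.Monic := (monic_X_sub_C z.re).of_mul_monic_left (hQ ▸ hP)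
      have hQdeg : Q.natDegree = N := by
        have h3 := hQ ▸ hdegP
        rw [(monic_X_sub_C z.re).natDegree_mul hQmon, natDegree_X_sub_C] at h3
        omega
      have hQroots : ∀ w : ℂ, aeval w Q = 0 → w.re < 0 := by
        intro w hw
        apply hroots
        rw [hQ, map_mul, hw, mul_zero]
      have hres := inv_linear (show (0:ℝ) < -z.re by linarith) (ih Q hQmon (by omega) hQroots)
      have heq : (X + C (-z.re)) * Q = P := by
        rw [hQ, map_neg, ← sub_eq_add_neg]
      rwa [heq] at hres
    · -- complex root pair
      obtain ⟨Q, hQ⟩ := P.quadratic_dvd_of_aeval_eq_zero_im_ne_zero hz him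
      set b : ℝ := -(2 * z.re) with hbdef
      set c : ℝ := ‖z‖^2 with hcdef
      have hfeq : X^2 - C (2*z.re) * X + C (‖z‖^2) = X^2 + (C b * X + C c) := by
        rw [hbdef, hcdef, map_neg]
        ring
      rw [hfeq] at hQ
      have hfmon : (X^2 + (C b * X + C c) : ℝ[X]).Monic := by
        apply monic_X_pow_add
        exact lt_of_le_of_lt (degree_linear_le) (by norm_num)
      have hQmon : Q.Monic := hfmon.of_mul_monic_left (hQ ▸ hP)
      have hQdeg : Q.natDegree = N - 1 ∧ 1 ≤ N := by
        have h3 := hQ ▸ hdegP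
        rw [hfmon.natDegree_mul hQmon, quad_natDegree] at h3
        omega
      have hQroots : ∀ w : ℂ, aeval w Q = 0 → w.re < 0 := by
        intro w hw
        apply hroots
        rw [hQ, map_mul, hw, mul_zero]
      have hb : 0 < b := by rw [hbdef]; linarith
      have hc : 0 < c := by
        rw [hcdef]
        have hz0 : z ≠ 0 := by
          intro h0
          rw [h0] at hzre
          simp at hzre
        have := norm_pos_iff.mpr hz0
        positivity
      have hres := inv_quad hb hc (ih Q hQmon (by omega) hQroots)
      rwa [← hQ] at hres


lemma A_def (P : ℝ[X]) (k : ℕ) : A P k = P.reverse.coeff k := rfl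


lemma phase (m : Multiset ℂ) (hm : ∀ r ∈ m, r.re < 0) :
    eval Complex.I (m.map (fun r => X - C r)).prod ≠ 0 ∧
    0 ≤ (eval Complex.I (derivative (m.map (fun r => X - C r)).prod) *
        (starRingEnd ℂ) (eval Complex.I (m.map (fun r => X - C r)).prod)).re ∧
    (m ≠ 0 → 0 < (eval Complex.I (derivative (m.map (fun r => X - C r)).prod) *
        (starRingEnd ℂ) (eval Complex.I (m.map (fun r => X - C r)).prod)).re) := by
  induction m using Multiset.induction with
  | empty => simp
  | cons a s ih =>
    have ha : a.re < 0 := hm a (Multiset.mem_cons_self a s)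
    obtain ⟨h0, hge, _⟩ := ih (fun r hr => hm r (Multiset.mem_cons_of_mem hr))
    set H := (s.map fun r => X - C r).prod with hH
    have hprod : ((a ::ₘ s).map fun r => X - C r).prod = (X - C a) * H := by
      rw [Multiset.map_cons, Multiset.prod_cons]
    set h : ℂ := eval Complex.I H with hh
    set h' : ℂ := eval Complex.I (derivative H) with hh'
    set w : ℂ := Complex.I - a with hw
    have hwre : w.re = -a.re := by rw [hw]; simp
    have hwne : w ≠ 0 := by
      intro h0'
      have := congrArg Complex.re h0'
      rw [hwre] at this
      simp at this
      linarith
    have e1 : eval Complex.I (((a ::ₘ s).map fun r => X - C r).prod) = w * h := by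
      rw [hprod]; simp [hw, hh]
    have e2 : eval Complex.I (derivative (((a ::ₘ s).map fun r => X - C r).prod)) = h + w * h' := by
      rw [hprod, derivative_mul]
      simp [hw, hh, hh']
    have key : (eval Complex.I (derivative (((a ::ₘ s).map fun r => X - C r).prod)) *
        (starRingEnd ℂ) (eval Complex.I (((a ::ₘ s).map fun r => X - C r).prod))).re
        = w.re * Complex.normSq h + Complex.normSq w * (h' * (starRingEnd ℂ) h).re := by
      rw [e1, e2, map_mul]
      have expand : (h + w * h') * ((starRingEnd ℂ) w * (starRingEnd ℂ) h)
          = (starRingEnd ℂ) w * (h * (starRingEnd ℂ) h) + (w * (starRingEnd ℂ) w) * (h' * (starRingEnd ℂ) h) := by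
        ring
      rw [expand, Complex.mul_conj, Complex.mul_conj]
      simp [Complex.add_re, Complex.mul_re, Complex.conj_re, Complex.conj_im]
    have hns : 0 < Complex.normSq h := Complex.normSq_pos.mpr h0
    have hterm1 : 0 < w.re * Complex.normSq h := by
      rw [hwre]; nlinarith
    have hterm2 : 0 ≤ Complex.normSq w * (h' * (starRingEnd ℂ) h).re :=
      mul_nonneg (Complex.normSq_nonneg w) hge
    refine ⟨?_, ?_, ?_⟩
    · rw [e1]; exact mul_ne_zero hwne h0
    · rw [key]; linarith
    · intro _; rw [key]; linarith

end UnstableAux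

open UnstableAux in
theorem unstable_special_coeffs (n : ℕ) (hn : 5 ≤ n) (α : ℕ → ℝ)
    (hα2 : α 2 = 2) (hα4 : α 4 = 1)
    (hconv : ∀ k, n < k → α k = 0)
    (h7 : 0 ≤ α 7 - α 1 * α 6) :
    ∃ z : ℂ, aeval z (X ^ n + ∑ i ∈ Finset.range n, C (α (i + 1)) * X ^ (n - 1 - i)) = 0
      ∧ 0 ≤ z.re := by
  by_contra hcon
  push_neg at hcon
  set S : ℝ[X] := ∑ i ∈ Finset.range n, C (α (i + 1)) * X ^ (n - 1 - i) with hS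
  set P : ℝ[X] := X ^ n + S with hP
  have hroots : ∀ z : ℂ, aeval z P = 0 → z.re < 0 := fun z hz => hcon z hz
  have hSdeg : S.degree < (n : WithBot ℕ) := by
    rw [hS]
    apply lt_of_le_of_lt (degree_sum_le _ _)
    rw [Finset.sup_lt_iff (by exact WithBot.bot_lt_coe n)]
    intro i hi
    apply lt_of_le_of_lt (degree_C_mul_X_pow_le _ _)
    rw [Finset.mem_range] at hi
    exact_mod_cast (show n - 1 - i < n by omega)
  have hPmon : P.Monic := monic_X_pow_add hSdeg
  have hPdeg : P.natDegree = n := by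
    have hd : P.degree = (n : WithBot ℕ) := by
      rw [hP, add_comm, degree_add_eq_right_of_degree_lt (by rwa [degree_X_pow]), degree_X_pow]
    exact natDegree_eq_of_degree_eq_some hd
  have hcoeff : ∀ k, 1 ≤ k → k ≤ n → P.coeff (n - k) = α k := by
    intro k h1 h2
    have hx : (X ^ n : ℝ[X]).coeff (n - k) = 0 := by
      rw [coeff_X_pow, if_neg (by omega)]
    have hs : S.coeff (n - k) = α k := by
      rw [hS, finset_sum_coeff]
      rw [Finset.sum_eq_single (k - 1)]
      · rw [coeff_C_mul, coeff_X_pow, if_pos (by omega), mul_one]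
        congr 1
        omega
      · intro i hi hne
        rw [Finset.mem_range] at hi
        rw [coeff_C_mul, coeff_X_pow, if_neg (by omega), mul_zero]
      · intro hmem
        exact absurd (Finset.mem_range.mpr (by omega)) hmem
    rw [hP, coeff_add, hx, hs, zero_add]
  have hA : ∀ k, 1 ≤ k → A P k = α k := by
    intro k hk
    by_cases h : k ≤ n
    · rw [A_def, coeff_reverse, hPdeg, revAt_le h]
      exact hcoeff k hk h
    · rw [A_zero_of_gt (by omega)]
      exact (hconv k (by omega)).symm
  obtain ⟨hA0, hnn, hpos, hp1, hp2, hp3, hp3s⟩ := stable_inv P.natDegree P hPmon le_rfl hroots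
  rcases Nat.lt_or_ge n 6 with h5|h6
  · -- n = 5 : phase argument
    have hn5 : n = 5 := by omega
    subst hn5
    set Pc : ℂ[X] := P.map (algebraMap ℝ ℂ) with hPc
    have hPcmon : Pc.Monic := hPmon.map _
    have hsplit : Pc = (Pc.roots.map fun a => X - C a).prod :=
      (IsAlgClosed.splits Pc).eq_prod_roots_of_monic hPcmon
    have hroots' : ∀ r ∈ Pc.roots, r.re < 0 := by
      intro r hr
      apply hroots
      have h1 : eval r Pc = 0 := isRoot_of_mem_roots hr
      rw [hPc, eval_map, ← aeval_def] at h1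
      exact h1
    obtain ⟨_, _, hstrict⟩ := phase Pc.roots hroots'
    have hne : Pc.roots ≠ 0 := by
      intro h0
      have h2 : Pc.natDegree = 5 := by rw [hPc, hPmon.natDegree_map]; exact hPdeg
      rw [hsplit, h0] at h2
      simp at h2
    have hposre := hstrict hne
    rw [← hsplit] at hposre
    have hPexp : P = X ^ 5 + (C (α 1) * X ^ 4 + C (α 2) * X ^ 3 + C (α 3) * X ^ 2
        + C (α 4) * X + C (α 5)) := by
      rw [hP, hS]
      norm_num [Finset.sum_range_succ]
    have hI2 : Complex.I ^ 2 = -1 := Complex.I_sq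
    have hI3 : Complex.I ^ 3 = -Complex.I := by rw [pow_succ, hI2]; ring
    have hI4 : Complex.I ^ 4 = 1 := by rw [show (4:ℕ) = 2+2 from rfl, pow_add, hI2]; ring
    have hI5 : Complex.I ^ 5 = Complex.I := by rw [pow_succ, hI4, one_mul]
    have hv1 : aeval Complex.I P = ((α 1 - α 3 + α 5 : ℝ) : ℂ) := by
      rw [hPexp, hα2, hα4]
      simp only [map_add, map_mul, map_pow, aeval_X, aeval_C, map_one, map_ofNat,
        Complex.coe_algebraMap]
      rw [hI5, hI4, hI3, hI2]
      push_cast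
      ring
    have hv2 : aeval Complex.I (derivative P) = ((2 * α 3 - 4 * α 1 : ℝ) : ℂ) * Complex.I := by
      rw [hPexp, hα2, hα4]
      simp only [derivative_add, derivative_mul, derivative_C, derivative_X, derivative_X_pow,
        derivative_one]
      simp only [map_add, map_mul, map_pow, aeval_X, aeval_C, map_one, map_ofNat,
        Complex.coe_algebraMap, map_natCast, zero_mul, mul_one, zero_add, add_zero, mul_zero,
        mul_comm]
      rw [hI4, hI3, hI2]
      push_cast
      ring
    have e1 : eval Complex.I Pc = aeval Complex.I P := by rw [hPc, eval_map, aeval_def]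
    have e2 : eval Complex.I (derivative Pc) = aeval Complex.I (derivative P) := by
      rw [hPc, derivative_map, eval_map, aeval_def]
    rw [e1, e2, hv1, hv2] at hposre
    rw [Complex.conj_ofReal] at hposre
    simp [Complex.mul_re, Complex.ofReal_re, Complex.ofReal_im, Complex.I_re, Complex.I_im]
      at hposre
  rcases Nat.lt_or_ge n 7 with h6|h7n
  · -- n = 6
    have ha7 : α 7 = 0 := hconv 7 (by omega)
    have h1 : 0 < A P 1 := hpos 1 (by omega)
    have h6p : 0 < A P 6 := hpos 6 (by omega)
    rw [hA 1 (by omega)] at h1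
    rw [hA 6 (by omega)] at h6p
    nlinarith
  · have := hp3s (by omega)
    rw [hA 1 (by omega), hA 6 (by omega), hA 7 (by omega)] at this
    linarith
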